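/- Let R = {r_1,…,r_t} ⊆ {1,…,L−1} and Γ = {K_{r_1},…,K_{r_t}}, and let G_λ(θ, R, Γ) be the composition of γ embeddings adding K_{r_i} neurons to layer r_i for i = 1,…,t, each with its own duplicated unit h_i and coefficients λ summing to one. Then for every parameter vector θ, the empirical risk of the network enlarged at all layers in R is preserved: R̂_emp(G_λ(θ, R, Γ)) = R_emp(θ). -/

import Mathlib

/-- Parameters of a fully connected feedforward network: `w ℓ j i` is the weight from
unit `i` of layer `ℓ-1` to unit `j` of layer `ℓ`, and `b ℓ j` is the bias of unit `j`
of layer `ℓ`.  Layers are numbered `1, …, L` (layer `0` is the input); units within a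
layer are numbered from `0`, so layer `ℓ` consists of the units `0, …, H ℓ - 1`. -/
structure NNParams where
  w : ℕ → ℕ → ℕ → ℝ
  b : ℕ → ℕ → ℝ

/-- `layerOut g H θ x ℓ i` : the output of unit `i` of layer `ℓ` on input `x`
(`layerOut g H θ x 0 = x`, and for `ℓ ≥ 1` it is `g` applied to the pre-activation). -/
noncomputable def layerOut (g : ℝ → ℝ) (H : ℕ → ℕ) (θ : NNParams) (x : ℕ → ℝ) :
    ℕ → ℕ → ℝ
  | 0, i => x i
  | ℓ + 1, i =>
      g (∑ j ∈ Finset.range (H ℓ), θ.w (ℓ + 1) i j * layerOut g H θ x ℓ j + θ.b (ℓ + 1) i)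

/-- Pre-activation `a_j^ℓ(x, θ)` of unit `j` of layer `ℓ ≥ 1`:
`a_j^ℓ = ∑_{i < H (ℓ-1)} w_{ji}^ℓ · (output of unit i of layer ℓ-1) + σ_j^ℓ`.
The outputs of the last layer `L` are `f_r(x,θ) = preact g H θ x L r` (linear output units). -/
noncomputable def preact (g : ℝ → ℝ) (H : ℕ → ℕ) (θ : NNParams) (x : ℕ → ℝ)
    (ℓ j : ℕ) : ℝ :=
  ∑ i ∈ Finset.range (H (ℓ - 1)), θ.w ℓ j i * layerOut g H θ x (ℓ - 1) i + θ.b ℓ j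

/-- Empirical risk `R_emp(θ) = (1/P) ∑_{p<P} ℒ(y^p, f(x^p, θ))`, where the network has
`L` layers with layer sizes given by `H`, the training inputs are `X p` and the labels
`Y p`, and `m` is the output dimension seen by the loss. -/
noncomputable def Remp (g : ℝ → ℝ) (H : ℕ → ℕ) (L P : ℕ) {m : ℕ}
    (X Y : ℕ → ℕ → ℝ) (loss : (ℕ → ℝ) → (Fin m → ℝ) → ℝ) (θ : NNParams) : ℝ :=
  (1 / (P : ℝ)) * ∑ p ∈ Finset.range P,
    loss (Y p) (fun r => preact g H θ (X p) L r)

/-- Layer sizes of the network enlarged by adding `K` new neurons to layer `l`. -/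
def enlargeH (H : ℕ → ℕ) (l K : ℕ) : ℕ → ℕ :=
  fun ℓ => if ℓ = l then H l + K else H ℓ

/-- The embedding `α_{ζv}` : copy all parameters, give the `k`-th new neuron of layer `l`
(`k = 0, …, K-1`, i.e. unit `H l + k`) the bias `ζ k` and incoming weights `v k`, and
set all weights from the new neurons to layer `l+1` to zero. -/
noncomputable def alphaEmb (H : ℕ → ℕ) (l K : ℕ) (ζ : ℕ → ℝ) (v : ℕ → ℕ → ℝ)
    (θ : NNParams) : NNParams where
  w := fun ℓ j i =>
    if ℓ = l ∧ H l ≤ j then v (j - H l) i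
    else if ℓ = l + 1 ∧ H l ≤ i then 0
    else θ.w ℓ j i
  b := fun ℓ j => if ℓ = l ∧ H l ≤ j then ζ (j - H l) else θ.b ℓ j

/-- The embedding `β_{ζs}` : copy all parameters except the biases of layer `l+1`, give
the `k`-th new neuron of layer `l` the bias `ζ k` and zero incoming weights, set the
outgoing weight from the `k`-th new neuron to unit `j` of layer `l+1` to `s j k`, and
replace the bias of unit `j` of layer `l+1` by `σ_j - ∑_{k<K} s j k · g (ζ k)`. -/
noncomputable def betaEmb (g : ℝ → ℝ) (H : ℕ → ℕ) (l K : ℕ) (ζ : ℕ → ℝ)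
    (s : ℕ → ℕ → ℝ) (θ : NNParams) : NNParams where
  w := fun ℓ j i =>
    if ℓ = l ∧ H l ≤ j then 0
    else if ℓ = l + 1 ∧ H l ≤ i then s j (i - H l)
    else θ.w ℓ j i
  b := fun ℓ j =>
    if ℓ = l ∧ H l ≤ j then ζ (j - H l)
    else if ℓ = l + 1 then θ.b (l + 1) j - ∑ k ∈ Finset.range K, s j k * g (ζ k)
    else θ.b ℓ j

/-- The embedding `γ_λ` : duplicate unit `h` of layer `l` into each of the `K` new
neurons (same bias and incoming weights as unit `h`), and split the outgoing weights:
unit `h` keeps `lam 0 · w_{jh}^{l+1}` and the `k`-th new neuron (`k = 0, …, K-1`,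
i.e. unit `H l + k`, corresponding to `λ_{k+1}` of the paper) gets
`lam (k+1) · w_{jh}^{l+1}`; all other parameters are copied. -/
noncomputable def gammaEmb (H : ℕ → ℕ) (l K : ℕ) (h : ℕ) (lam : ℕ → ℝ)
    (θ : NNParams) : NNParams where
  w := fun ℓ j i =>
    if ℓ = l ∧ H l ≤ j then θ.w l h i
    else if ℓ = l + 1 ∧ i = h then lam 0 * θ.w (l + 1) j h
    else if ℓ = l + 1 ∧ H l ≤ i then lam (i - H l + 1) * θ.w (l + 1) j h
    else θ.w ℓ j i
  b := fun ℓ j => if ℓ = l ∧ H l ≤ j then θ.b l h else θ.b ℓ j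

/-- `θ` with the single weight `w ℓ j i` replaced by `t`. -/
noncomputable def updW (θ : NNParams) (ℓ j i : ℕ) (t : ℝ) : NNParams :=
  ⟨fun ℓ' j' i' => if ℓ' = ℓ ∧ j' = j ∧ i' = i then t else θ.w ℓ' j' i', θ.b⟩

/-- `θ` with the single bias `b ℓ j` replaced by `t`. -/
noncomputable def updB (θ : NNParams) (ℓ j : ℕ) (t : ℝ) : NNParams :=
  ⟨θ.w, fun ℓ' j' => if ℓ' = ℓ ∧ j' = j then t else θ.b ℓ' j'⟩

/-- `∇ R_emp(θ) = 0` : every partial derivative of the empirical risk with respect to an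
actual network parameter (a weight `w ℓ j i` or a bias `b ℓ j`, `1 ≤ ℓ ≤ L`, `j < H ℓ`,
`i < H (ℓ-1)`) vanishes at `θ`. -/
def IsCritical (g : ℝ → ℝ) (H : ℕ → ℕ) (L P : ℕ) {m : ℕ}
    (X Y : ℕ → ℕ → ℝ) (loss : (ℕ → ℝ) → (Fin m → ℝ) → ℝ) (θ : NNParams) : Prop :=
  (∀ ℓ j i, 1 ≤ ℓ → ℓ ≤ L → j < H ℓ → i < H (ℓ - 1) →
      deriv (fun t => Remp g H L P X Y loss (updW θ ℓ j i t)) (θ.w ℓ j i) = 0) ∧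
  ∀ ℓ j, 1 ≤ ℓ → ℓ ≤ L → j < H ℓ →
      deriv (fun t => Remp g H L P X Y loss (updB θ ℓ j t)) (θ.b ℓ j) = 0

/-- Layer sizes after enlarging layer `p.1` by `p.2` neurons for each pair in the list. -/
def multiEnlargeH : (ℕ → ℕ) → List (ℕ × ℕ) → (ℕ → ℕ)
  | H, [] => H
  | H, (l, K) :: rest => multiEnlargeH (enlargeH H l K) rest

/-- Composition of `α` embeddings: for each `(l, K)` in the list (in order), add `K` new
neurons to layer `l` via `α` with biases `ζ l` and incoming weights `v l`. -/
noncomputable def multiAlpha (ζ : ℕ → ℕ → ℝ) (v : ℕ → ℕ → ℕ → ℝ) :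
    (ℕ → ℕ) → List (ℕ × ℕ) → NNParams → NNParams
  | _, [], θ => θ
  | H, (l, K) :: rest, θ =>
      multiAlpha ζ v (enlargeH H l K) rest (alphaEmb H l K (ζ l) (v l) θ)

noncomputable def multiBeta (g : ℝ → ℝ) (ζ : ℕ → ℕ → ℝ) (s : ℕ → ℕ → ℕ → ℝ) :
    (ℕ → ℕ) → List (ℕ × ℕ) → NNParams → NNParams
  | _, [], θ => θ
  | H, (l, K) :: rest, θ =>
      multiBeta g ζ s (enlargeH H l K) rest (betaEmb g H l K (ζ l) (s l) θ)

noncomputable def multiGamma (hsel : ℕ → ℕ) (lam : ℕ → ℕ → ℝ) :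
    (ℕ → ℕ) → List (ℕ × ℕ) → NNParams → NNParams
  | _, [], θ => θ
  | H, (l, K) :: rest, θ =>
      multiGamma hsel lam (enlargeH H l K) rest (gammaEmb H l K (hsel l) (lam l) θ)

/-- A single enlargement step: either a `β` embedding with zero outgoing weights, or a
`γ` embedding. -/
inductive EmbStep where
  | beta (l K : ℕ) (ζ : ℕ → ℝ)
  | gamma (l K : ℕ) (h : ℕ) (lam : ℕ → ℝ)

def EmbStep.layer : EmbStep → ℕ
  | .beta l _ _ => l
  | .gamma l _ _ _ => l

def EmbStep.count : EmbStep → ℕ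
  | .beta _ K _ => K
  | .gamma _ K _ _ => K

noncomputable def EmbStep.apply (g : ℝ → ℝ) (H : ℕ → ℕ) (θ : NNParams) : EmbStep → NNParams
  | .beta l K ζ => betaEmb g H l K ζ (fun _ _ => 0) θ
  | .gamma l K h lam => gammaEmb H l K h lam θ

def EmbStep.OK (H : ℕ → ℕ) (L : ℕ) : EmbStep → Prop
  | .beta l _ _ => 1 ≤ l ∧ l + 1 ≤ L
  | .gamma l K h lam => 1 ≤ l ∧ l + 1 ≤ L ∧ h < H l ∧ ∑ i ∈ Finset.range (K + 1), lam i = 1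

noncomputable def applySteps (g : ℝ → ℝ) : (ℕ → ℕ) → List EmbStep → NNParams → NNParams
  | _, [], θ => θ
  | H, st :: rest, θ =>
      applySteps g (enlargeH H st.layer st.count) rest (EmbStep.apply g H θ st)

def stepsH : (ℕ → ℕ) → List EmbStep → (ℕ → ℕ)
  | H, [] => H
  | H, st :: rest => stepsH (enlargeH H st.layer st.count) rest


private lemma key_sum (hl K h : ℕ) (lam : ℕ → ℝ) (hh : h < hl)
    (hlam : ∑ i ∈ Finset.range (K + 1), lam i = 1) (W u : ℕ → ℝ) :
    ∑ i ∈ Finset.range (hl + K),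
      (if i = h then lam 0 * W h else if hl ≤ i then lam (i - hl + 1) * W h else W i)
        * (if hl ≤ i then u h else u i)
    = ∑ i ∈ Finset.range hl, W i * u i := by
  rw [← Finset.sum_range_add_sum_Ico _ (Nat.le_add_right hl K)]
  have h1 : ∑ i ∈ Finset.range hl,
      (if i = h then lam 0 * W h else if hl ≤ i then lam (i - hl + 1) * W h else W i)
        * (if hl ≤ i then u h else u i)
      = ∑ i ∈ Finset.range hl, (W i * u i + (if i = h then (lam 0 - 1) * (W h * u h) else 0)) := by
    refine Finset.sum_congr rfl fun i hi => ?_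
    have hi' : i < hl := Finset.mem_range.mp hi
    have : ¬ hl ≤ i := by omega
    rcases eq_or_ne i h with rfl | hne
    · simp [this]; ring
    · simp [this, hne]
  have h2 : ∑ i ∈ Finset.Ico hl (hl + K),
      (if i = h then lam 0 * W h else if hl ≤ i then lam (i - hl + 1) * W h else W i)
        * (if hl ≤ i then u h else u i)
      = ∑ k ∈ Finset.range K, lam (k + 1) * (W h * u h) := by
    rw [Finset.sum_Ico_eq_sum_range]
    refine Finset.sum_congr (by rw [Nat.add_sub_cancel_left]) fun k hk => ?_
    have h1 : hl + k ≠ h := by omega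
    have h2 : hl ≤ hl + k := Nat.le_add_right _ _
    simp [h1, h2, Nat.add_sub_cancel_left]; ring
  rw [h1, h2, Finset.sum_add_distrib, Finset.sum_ite_eq' (Finset.range hl) h,
    if_pos (Finset.mem_range.mpr hh), ← Finset.sum_mul]
  have : ∑ k ∈ Finset.range K, lam (k + 1) = 1 - lam 0 := by
    have := Finset.sum_range_succ' lam K
    rw [hlam] at this; linarith
  rw [this]; ring

private lemma layerOut_gamma (g : ℝ → ℝ) (H : ℕ → ℕ) (l K h : ℕ) (lam : ℕ → ℝ)
    (θ : NNParams) (x : ℕ → ℝ) (hl : 1 ≤ l) (hh : h < H l)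
    (hlam : ∑ i ∈ Finset.range (K + 1), lam i = 1) :
    ∀ ℓ j, layerOut g (enlargeH H l K) (gammaEmb H l K h lam θ) x ℓ j
      = layerOut g H θ x ℓ (if ℓ = l ∧ H l ≤ j then h else j) := by
  intro ℓ
  induction ℓ with
  | zero =>
    intro j
    have h0 : (0 : ℕ) ≠ l := by omega
    simp [layerOut, h0]
  | succ n ih =>
    intro j
    by_cases hnl : n + 1 = l
    · -- computing layer l itself
      subst hnl
      have hne : n ≠ n + 1 := by omega
      have hx : ¬ (n + 1 = n + 1 + 1) := by omega
      simp only [layerOut]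
      have hHn : enlargeH H (n + 1) K n = H n := by simp [enlargeH, hne]
      rw [hHn]
      by_cases hj : H (n + 1) ≤ j
      · rw [if_pos (by simp [hj])]
        congr 1
        congr 1
        · refine Finset.sum_congr rfl fun i hi => ?_
          rw [ih i]
          simp [gammaEmb, hne, hj]
        · simp [gammaEmb, hj]
      · rw [if_neg (by simp [hj])]
        congr 1
        congr 1
        · refine Finset.sum_congr rfl fun i hi => ?_
          rw [ih i]
          simp [gammaEmb, hne, hj, hx]
        · simp [gammaEmb, hj]
    · by_cases hn : n = l
      · -- computing layer l + 1
        subst hn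
        simp only [layerOut]
        have hsplit :
            ∑ i ∈ Finset.range (enlargeH H n K n),
              (gammaEmb H n K h lam θ).w (n + 1) j i
                * layerOut g (enlargeH H n K) (gammaEmb H n K h lam θ) x n i
            = ∑ i ∈ Finset.range (H n), θ.w (n + 1) j i * layerOut g H θ x n i := by
          have hHn : enlargeH H n K n = H n + K := by simp [enlargeH]
          rw [hHn]
          have := key_sum (H n) K h lam hh hlam (θ.w (n + 1) j) (layerOut g H θ x n)
          rw [← this]
          refine Finset.sum_congr rfl fun i hi => ?_
          rw [ih i]
          have hne1 : ¬ (n + 1 = n) := by omega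
          rcases eq_or_ne i h with rfl | hih
          · have hni : ¬ (H n ≤ i) := by omega
            simp [gammaEmb, hne1, hni]
          · by_cases hHi : H n ≤ i
            · simp [gammaEmb, hne1, hih, hHi]
            · simp [gammaEmb, hne1, hih, hHi]
        rw [hsplit]
        have hne1 : ¬ (n + 1 = n) := by omega
        simp [gammaEmb, hne1, hnl]
      · -- layers unrelated to l
        have hne1 : ¬ (n + 1 = l) := hnl
        have hne2 : n ≠ l := hn
        simp only [layerOut, hne1, false_and, if_false]
        have hHn : enlargeH H l K n = H n := by simp [enlargeH, hne2]
        rw [hHn]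
        congr 1
        congr 1
        · refine Finset.sum_congr rfl fun i hi => ?_
          rw [ih i]
          simp [gammaEmb, hne1, hne2, show ¬ (n + 1 = l + 1) from by omega]
        · simp [gammaEmb, hne1]

private lemma preact_gamma (g : ℝ → ℝ) (H : ℕ → ℕ) (l K h : ℕ) (lam : ℕ → ℝ)
    (θ : NNParams) (x : ℕ → ℝ) (hl : 1 ≤ l) (hh : h < H l)
    (hlam : ∑ i ∈ Finset.range (K + 1), lam i = 1)
    (ℓ : ℕ) (hℓ : l + 1 ≤ ℓ) (j : ℕ) :
    preact g (enlargeH H l K) (gammaEmb H l K h lam θ) x ℓ j = preact g H θ x ℓ j := by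
  obtain ⟨n, rfl⟩ : ∃ n, ℓ = n + 1 := ⟨ℓ - 1, by omega⟩
  have hn1 : n + 1 - 1 = n := rfl
  unfold preact
  rw [hn1]
  by_cases hn : n = l
  · subst hn
    have hne1 : ¬ (n + 1 = n) := by omega
    have hHn : enlargeH H n K n = H n + K := by simp [enlargeH]
    rw [hHn]
    have hb : (gammaEmb H n K h lam θ).b (n + 1) j = θ.b (n + 1) j := by
      simp [gammaEmb, hne1]
    rw [hb]
    congr 1
    have := key_sum (H n) K h lam hh hlam (θ.w (n + 1) j) (layerOut g H θ x n)
    rw [← this]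
    refine Finset.sum_congr rfl fun i hi => ?_
    rw [layerOut_gamma g H n K h lam θ x hl hh hlam n i]
    rcases eq_or_ne i h with rfl | hih
    · have hni : ¬ (H n ≤ i) := by omega
      simp [gammaEmb, hne1, hni]
    · by_cases hHi : H n ≤ i
      · simp [gammaEmb, hne1, hih, hHi]
      · simp [gammaEmb, hne1, hih, hHi]
  · have hne1 : ¬ (n + 1 = l) := by omega
    have hne2 : ¬ (n + 1 = l + 1) := by omega
    have hHn : enlargeH H l K n = H n := by simp [enlargeH, hn]
    rw [hHn]
    congr 1
    · refine Finset.sum_congr rfl fun i hi => ?_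
      rw [layerOut_gamma g H l K h lam θ x hl hh hlam n i]
      simp [gammaEmb, hne1, hne2, hn]
    · simp [gammaEmb, hne1]

private lemma Remp_gamma (g : ℝ → ℝ) (H : ℕ → ℕ) (L P : ℕ) {m : ℕ}
    (X Y : ℕ → ℕ → ℝ) (loss : (ℕ → ℝ) → (Fin m → ℝ) → ℝ)
    (l K h : ℕ) (lam : ℕ → ℝ) (θ : NNParams)
    (hl : 1 ≤ l) (hL : l + 1 ≤ L) (hh : h < H l)
    (hlam : ∑ i ∈ Finset.range (K + 1), lam i = 1) :
    Remp g (enlargeH H l K) L P X Y loss (gammaEmb H l K h lam θ)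
      = Remp g H L P X Y loss θ := by
  unfold Remp
  congr 1
  refine Finset.sum_congr rfl fun p _ => ?_
  congr 1
  funext r
  exact preact_gamma g H l K h lam θ (X p) hl hh hlam L hL r

private lemma multiGamma_aux (g : ℝ → ℝ) (L P : ℕ) {m : ℕ}
    (X Y : ℕ → ℕ → ℝ) (loss : (ℕ → ℝ) → (Fin m → ℝ) → ℝ)
    (hsel : ℕ → ℕ) (lam : ℕ → ℕ → ℝ) :
    ∀ (RG : List (ℕ × ℕ)), (RG.map Prod.fst).Nodup →
    ∀ (H : ℕ → ℕ) (θ : NNParams),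
    (∀ p ∈ RG, 1 ≤ p.1 ∧ p.1 + 1 ≤ L ∧ hsel p.1 < H p.1 ∧
      ∑ i ∈ Finset.range (p.2 + 1), lam p.1 i = 1) →
    Remp g (multiEnlargeH H RG) L P X Y loss (multiGamma hsel lam H RG θ)
      = Remp g H L P X Y loss θ := by
  intro RG
  induction RG with
  | nil => intro _ H θ _; rfl
  | cons p rest ih =>
    obtain ⟨l, K⟩ := p
    intro hnd H θ hR
    simp only [List.map_cons, List.nodup_cons] at hnd
    obtain ⟨hnotin, hnd'⟩ := hnd
    obtain ⟨hl, hL, hh, hlam⟩ := hR (l, K) List.mem_cons_self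
    have step := Remp_gamma g H L P X Y loss l K (hsel l) (lam l) θ hl hL hh hlam
    calc Remp g (multiEnlargeH H ((l, K) :: rest)) L P X Y loss
            (multiGamma hsel lam H ((l, K) :: rest) θ)
        = Remp g (multiEnlargeH (enlargeH H l K) rest) L P X Y loss
            (multiGamma hsel lam (enlargeH H l K) rest
              (gammaEmb H l K (hsel l) (lam l) θ)) := rfl
      _ = Remp g (enlargeH H l K) L P X Y loss (gammaEmb H l K (hsel l) (lam l) θ) := by
          refine ih hnd' (enlargeH H l K) _ fun q hq => ?_
          obtain ⟨h1, h2, h3, h4⟩ := hR q (List.mem_cons_of_mem _ hq)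
          have hne : q.1 ≠ l := by
            intro hEq
            exact hnotin (hEq ▸ List.mem_map_of_mem (f := Prod.fst) hq)
          refine ⟨h1, h2, ?_, h4⟩
          simpa [enlargeH, hne] using h3
      _ = Remp g H L P X Y loss θ := step

/-- Let `RG = [(r_1, K_{r_1}), …, (r_t, K_{r_t})]` describe adding
`K_{r_i}` neurons to the (pairwise distinct) hidden layers `r_i ∈ {1, …, L-1}`, each `γ`
step duplicating its own unit `hsel r_i < H r_i` with coefficients `lam r_i` summing to
one.  Then for every parameter vector `θ`, the composition of `γ` embeddings preserves
the empirical risk: `R̂_emp(G_λ(θ, R, Γ)) = R_emp(θ)`. -/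
theorem multiGamma_preserves_Remp
    (g : ℝ → ℝ) (H : ℕ → ℕ) (L P : ℕ) (X Y : ℕ → ℕ → ℝ)
    (loss : (ℕ → ℝ) → (Fin (H L) → ℝ) → ℝ)
    (RG : List (ℕ × ℕ)) (hnd : (RG.map Prod.fst).Nodup)
    (hsel : ℕ → ℕ) (lam : ℕ → ℕ → ℝ)
    (hR : ∀ p ∈ RG, 1 ≤ p.1 ∧ p.1 + 1 ≤ L ∧ hsel p.1 < H p.1 ∧
      ∑ i ∈ Finset.range (p.2 + 1), lam p.1 i = 1)
    (θ : NNParams) :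
    Remp g (multiEnlargeH H RG) L P X Y loss (multiGamma hsel lam H RG θ)
      = Remp g H L P X Y loss θ :=
  multiGamma_aux g L P X Y loss hsel lam RG hnd H θ hR
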